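/- The CEK commutative transitions terminate with local linear bound: defining the measure μ(t̄ | e | π) = |t̄| + |t̄'| if the top of π is an argument entry (t̄', e'), and μ = |t̄| otherwise, both commutative transitions →c1 and →c2 strictly decrease μ; consequently any sequence of consecutive commutative transitions from a reachable state has length at most 2·|t̄₀| where t̄₀ is the initial code. -/

import Mathlib

/-- Pure λ-terms (codes of the machine). -/
inductive PTerm : Type
  | var : ℕ → PTerm
  | lam : ℕ → PTerm → PTerm
  | app : PTerm → PTerm → PTerm
deriving DecidableEq

def PTerm.fv : PTerm → Finset ℕ
  | .var x => {x}
  | .lam x t => t.fv.erase x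
  | .app t u => t.fv ∪ u.fv

def PTerm.size : PTerm → ℕ
  | .var _ => 1
  | .lam _ t => t.size + 1
  | .app t u => t.size + u.size + 1

mutual
  /-- CEK closures. -/
  inductive CClo : Type
    | mk : PTerm → CEnv → CClo
  /-- CEK local environments. -/
  inductive CEnv : Type
    | nil : CEnv
    | cons : ℕ → CClo → CEnv → CEnv
end

def CEnv.lookup : CEnv → ℕ → Option CClo
  | .nil, _ => none
  | .cons y c e, x => if y = x then some c else e.lookup x

/-- CEK stack entries: argument entries `arg(t̄,e)` and function entries
    `fun(t̄,e)`. -/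
inductive CEntry : Type
  | arg : PTerm → CEnv → CEntry
  | fn : PTerm → CEnv → CEntry

/-- CEK states. -/
structure CState : Type where
  code : PTerm
  env : CEnv
  stack : List CEntry

/-- First commutative transition: processing an application pushes an argument
    entry and focuses on the function. -/
inductive CStep1 : CState → CState → Prop
  | step (t u : PTerm) (e : CEnv) (π : List CEntry) :
      CStep1 ⟨.app t u, e, π⟩ ⟨t, e, .arg u e :: π⟩

/-- Second commutative transition: once the function is evaluated to a value,
    the focus moves to the argument, pushing a function entry. -/
inductive CStep2 : CState → CState → Prop
  | step (x : ℕ) (t u : PTerm) (e e' : CEnv) (π : List CEntry) :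
      CStep2 ⟨.lam x t, e, .arg u e' :: π⟩ ⟨u, e', .fn (.lam x t) e :: π⟩

/-- Multiplicative transition. -/
inductive CStepM : CState → CState → Prop
  | step (x y : ℕ) (t u : PTerm) (e e' : CEnv) (π : List CEntry) :
      CStepM ⟨.lam y u, e, .fn (.lam x t) e' :: π⟩
             ⟨t, CEnv.cons x (CClo.mk (.lam y u) e) e', π⟩

/-- Exponential transition. -/
inductive CStepE : CState → CState → Prop
  | step (x : ℕ) (t : PTerm) (e e' : CEnv) (π : List CEntry) :
      e.lookup x = some (CClo.mk t e') →
      CStepE ⟨.var x, e, π⟩ ⟨t, e', π⟩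

/-- Any CEK transition. -/
def CStep (s s' : CState) : Prop :=
  CStep1 s s' ∨ CStep2 s s' ∨ CStepM s s' ∨ CStepE s s'

/-- Initial states. -/
def CState.Initial (s : CState) : Prop :=
  s.code.fv = ∅ ∧ s.env = .nil ∧ s.stack = []

/-- The measure `μ(t̄ | e | π)`: `|t̄| + |t̄'|` if the top of `π` is an argument
    entry `(t̄', e')`, and `|t̄|` otherwise. -/
def measureCEK : CState → ℕ
  | ⟨t, _, .arg u _ :: _⟩ => t.size + u.size
  | ⟨t, _, _⟩ => t.size

/-- Sequences of consecutive commutative transitions, with length. -/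
def CCIter : ℕ → CState → CState → Prop
  | 0, s, s' => s = s'
  | k + 1, s, s' => ∃ s'', (CStep1 s s'' ∨ CStep2 s s'') ∧ CCIter k s'' s'

mutual
  def cloOK (N : ℕ) : CClo → Prop
    | .mk t e => t.size ≤ N ∧ envOK N e
  def envOK (N : ℕ) : CEnv → Prop
    | .nil => True
    | .cons _ c e => cloOK N c ∧ envOK N e
end

def entryOK (N : ℕ) : CEntry → Prop
  | .arg t e => t.size ≤ N ∧ envOK N e
  | .fn t e => t.size ≤ N ∧ envOK N e

def stateOK (N : ℕ) (s : CState) : Prop :=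
  s.code.size ≤ N ∧ envOK N s.env ∧ ∀ en ∈ s.stack, entryOK N en

lemma lookup_ok {N : ℕ} : ∀ {e : CEnv} {x : ℕ} {c : CClo},
    envOK N e → e.lookup x = some c → cloOK N c
  | .nil, _, _, _, h => by simp [CEnv.lookup] at h
  | .cons y c' e, x, c, he, h => by
    simp only [CEnv.lookup] at h
    split at h
    · cases h; exact he.1
    · exact lookup_ok he.2 h

lemma pos_size (t : PTerm) : 1 ≤ t.size := by
  cases t <;> simp [PTerm.size]

lemma step_preserves {N : ℕ} {s s' : CState} (h : CStep s s')
    (hs : stateOK N s) : stateOK N s' := by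
  rcases h with h | h | h | h
  · rcases h with ⟨t, u, e, π⟩
    obtain ⟨h1, h2, h3⟩ := hs
    simp only [stateOK, PTerm.size] at *
    refine ⟨by omega, h2, ?_⟩
    intro en hen
    rcases List.mem_cons.mp hen with rfl | hen
    · exact ⟨by omega, h2⟩
    · exact h3 _ hen
  · rcases h with ⟨x, t, u, e, e', π⟩
    obtain ⟨h1, h2, h3⟩ := hs
    simp only [stateOK, PTerm.size] at *
    have harg := h3 _ List.mem_cons_self
    simp only [entryOK] at harg
    refine ⟨harg.1, harg.2, ?_⟩
    intro en hen
    rcases List.mem_cons.mp hen with rfl | hen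
    · exact ⟨by simp only [PTerm.size]; omega, h2⟩
    · exact h3 _ (List.mem_cons_of_mem _ hen)
  · rcases h with ⟨x, y, t, u, e, e', π⟩
    obtain ⟨h1, h2, h3⟩ := hs
    simp only [stateOK, PTerm.size] at *
    have hfn := h3 _ List.mem_cons_self
    simp only [entryOK, PTerm.size] at hfn
    refine ⟨by omega, ⟨⟨by simp only [PTerm.size]; omega, h2⟩, hfn.2⟩, ?_⟩
    intro en hen
    exact h3 _ (List.mem_cons_of_mem _ hen)
  · rcases h with ⟨x, t, e, e', π, hl⟩
    obtain ⟨h1, h2, h3⟩ := hs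
    simp only [stateOK] at *
    have := lookup_ok h2 hl
    exact ⟨this.1, this.2, h3⟩

lemma measure_decreases {s s' : CState} (h : CStep1 s s' ∨ CStep2 s s') :
    measureCEK s' < measureCEK s := by
  rcases h with h | h
  · rcases h with ⟨t, u, e, π⟩
    cases π with
    | nil => simp only [measureCEK, PTerm.size]; omega
    | cons en π =>
      cases en <;> simp only [measureCEK, PTerm.size] <;> omega
  · rcases h with ⟨x, t, u, e, e', π⟩
    simp only [measureCEK, PTerm.size]
    omega

lemma iter_le_measure {k : ℕ} {s s' : CState} (h : CCIter k s s') :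
    k ≤ measureCEK s := by
  induction k generalizing s with
  | zero => omega
  | succ k ih =>
    obtain ⟨s'', hstep, hrest⟩ := h
    have := measure_decreases hstep
    have := ih hrest
    omega

lemma reachable_ok {s₀ s : CState} (hinit : s₀.Initial)
    (hreach : Relation.ReflTransGen CStep s₀ s) :
    stateOK s₀.code.size s := by
  induction hreach with
  | refl => exact ⟨le_rfl, by rw [hinit.2.1]; trivial, by rw [hinit.2.2]; simp⟩
  | tail _ hstep ih => exact step_preserves hstep ih

/-- The CEK commutative transitions terminate, with a local linear bound: both
    commutative transitions strictly decrease the measure `μ`, and any sequence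
    of consecutive commutative transitions from a reachable state has length at
    most `2·|t̄₀|`, the size of the initial code. -/
theorem cek_commutative_measure_and_local_bound :
    (∀ s s', CStep1 s s' ∨ CStep2 s s' → measureCEK s' < measureCEK s) ∧
    (∀ (s₀ s s' : CState) (k : ℕ),
      s₀.Initial → Relation.ReflTransGen CStep s₀ s →
      CCIter k s s' → k ≤ 2 * s₀.code.size) := by
  constructor
  · intro s s' h; exact measure_decreases h
  · intro s₀ s s' k hinit hreach hiter
    have hok := reachable_ok hinit hreach
    have hm : measureCEK s ≤ 2 * s₀.code.size := by
      obtain ⟨hc, _, hst⟩ := hok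
      obtain ⟨t, e, π⟩ := s
      simp only at hc hst
      cases π with
      | nil => simp only [measureCEK]; omega
      | cons en π =>
        cases en with
        | arg u e' =>
          have := (hst _ List.mem_cons_self).1
          simp only [measureCEK]
          omega
        | fn u e' => simp only [measureCEK]; omega
    exact le_trans (iter_le_measure hiter) hm
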